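/- Let M be a matrix algebra with delta-form δ and μ = Ad(σ^{-1}). The element υ := δ(δ₀²) d^{-2} σ^{-2} δ₀^{-2} (for δ₀ positive invertible commuting with σ) satisfies υ = Σ_{x ∈ B} x* δ₀² μ^{-1}(x) δ₀^{-2}, where B is any orthonormal basis of M with respect to the inner product ⟨x,y⟩ = δ(y*x). -/

import Mathlib

open scoped ComplexOrder

open Matrix

lemma key1 (d : ℕ) (σ : Matrix (Fin d) (Fin d) ℂ)
    {ι : Type*} [Fintype ι] [DecidableEq ι] (b : ι → Matrix (Fin d) (Fin d) ℂ)
    (honb : ∀ i j, (d : ℂ) * ((star (b j)) * (b i) * σ).trace = if i = j then 1 else 0)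
    (hspan : Submodule.span ℂ (Set.range b) = ⊤) (a : Matrix (Fin d) (Fin d) ℂ) :
    ∑ i, ((d : ℂ) * ((star (b i)) * a * σ).trace) • b i = a := by
  have ha : a ∈ Submodule.span ℂ (Set.range b) := hspan ▸ Submodule.mem_top
  induction ha using Submodule.span_induction with
  | mem x hx =>
      obtain ⟨j, rfl⟩ := hx
      classical
      simp only [honb]
      simp [Finset.sum_ite_eq]
  | zero => simp
  | add x y hx hy ihx ihy =>
      calc ∑ i, ((d : ℂ) * ((star (b i)) * (x + y) * σ).trace) • b i
          = ∑ i, (((d : ℂ) * ((star (b i)) * x * σ).trace) • b i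
              + ((d : ℂ) * ((star (b i)) * y * σ).trace) • b i) := by
            refine Finset.sum_congr rfl fun i _ => ?_
            rw [mul_add, add_mul, trace_add, mul_add, add_smul]
        _ = x + y := by rw [Finset.sum_add_distrib, ihx, ihy]
  | smul c x hx ihx =>
      calc ∑ i, ((d : ℂ) * ((star (b i)) * (c • x) * σ).trace) • b i
          = c • ∑ i, ((d : ℂ) * ((star (b i)) * x * σ).trace) • b i := by
            rw [Finset.smul_sum]
            refine Finset.sum_congr rfl fun i _ => ?_
            rw [Matrix.mul_smul, Matrix.smul_mul, trace_smul, smul_eq_mul,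
              mul_left_comm, ← smul_smul]
        _ = c • x := by rw [ihx]

lemma key2 (d : ℕ) (hd : (d:ℂ) ≠ 0) (σ : Matrix (Fin d) (Fin d) ℂ)
    (hinv : σ⁻¹ * σ = 1)
    {ι : Type*} [Fintype ι] [DecidableEq ι] (b : ι → Matrix (Fin d) (Fin d) ℂ)
    (honb : ∀ i j, (d : ℂ) * ((star (b j)) * (b i) * σ).trace = if i = j then 1 else 0)
    (hspan : Submodule.span ℂ (Set.range b) = ⊤) (n m p q : Fin d) :
    ∑ i, (starRingEnd ℂ) (b i n m) * b i p q
      = (d:ℂ)⁻¹ * (if p = n then σ⁻¹ m q else 0) := by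
  have h := key1 d σ b honb hspan (Matrix.single n m (1:ℂ) * σ⁻¹)
  have htr : ∀ i, ((star (b i)) * (Matrix.single n m (1:ℂ) * σ⁻¹) * σ).trace
      = (starRingEnd ℂ) (b i n m) := by
    intro i
    rw [Matrix.mul_assoc, Matrix.mul_assoc, hinv, Matrix.mul_one]
    simp [Matrix.trace, Matrix.diag, Matrix.mul_apply, Matrix.single,
      Matrix.star_apply, Finset.sum_ite_eq, ite_and]
  have h2 := congrFun (congrFun h p) q
  simp only [Matrix.sum_apply, Matrix.smul_apply, htr, smul_eq_mul] at h2
  have h3 : (Matrix.single n m (1:ℂ) * σ⁻¹) p q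
      = if p = n then σ⁻¹ m q else 0 := by
    simp [Matrix.mul_apply, Matrix.single, ite_and, eq_comm]
  rw [h3] at h2
  rw [← h2]
  field_simp
  rw [Finset.sum_mul]
  refine Finset.sum_congr rfl fun i _ => by ring

lemma key3 (d : ℕ) (hd : (d:ℂ) ≠ 0) (σ : Matrix (Fin d) (Fin d) ℂ)
    (hinv : σ⁻¹ * σ = 1)
    {ι : Type*} [Fintype ι] [DecidableEq ι] (b : ι → Matrix (Fin d) (Fin d) ℂ)
    (honb : ∀ i j, (d : ℂ) * ((star (b j)) * (b i) * σ).trace = if i = j then 1 else 0)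
    (hspan : Submodule.span ℂ (Set.range b) = ⊤) (A : Matrix (Fin d) (Fin d) ℂ) :
    ∑ i, star (b i) * A * b i = ((d:ℂ)⁻¹ * A.trace) • σ⁻¹ := by
  ext p q
  rw [Matrix.sum_apply]
  have hexp : ∀ i, (star (b i) * A * b i) p q
      = ∑ n, ∑ m, A m n * ((starRingEnd ℂ) (b i m p) * b i n q) := by
    intro i
    simp only [Matrix.mul_apply, Finset.sum_mul, Matrix.star_apply, RCLike.star_def]
    exact Finset.sum_congr rfl fun n _ => Finset.sum_congr rfl fun m _ => by ring
  have hkey : ∀ n m : Fin d, ∑ i, (starRingEnd ℂ) (b i m p) * b i n q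
      = (d:ℂ)⁻¹ * (if n = m then σ⁻¹ p q else 0) := fun n m =>
    key2 d hd σ hinv b honb hspan m p n q
  calc ∑ i, (star (b i) * A * b i) p q
      = ∑ i, ∑ n, ∑ m, A m n * ((starRingEnd ℂ) (b i m p) * b i n q) :=
        Finset.sum_congr rfl fun i _ => hexp i
    _ = ∑ n, ∑ m, A m n * ∑ i, ((starRingEnd ℂ) (b i m p) * b i n q) := by
        rw [Finset.sum_comm]
        refine Finset.sum_congr rfl fun n _ => ?_
        rw [Finset.sum_comm]
        exact Finset.sum_congr rfl fun m _ => (Finset.mul_sum _ _ _).symm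
    _ = ∑ n, A n n * ((d:ℂ)⁻¹ * σ⁻¹ p q) := by
        refine Finset.sum_congr rfl fun n _ => ?_
        simp only [hkey, mul_ite, mul_zero]
        simp [Finset.sum_ite_eq]
    _ = (((d:ℂ)⁻¹ * A.trace) • σ⁻¹) p q := by
        simp only [Matrix.smul_apply, smul_eq_mul, Matrix.trace, Matrix.diag,
          Finset.sum_mul, Finset.mul_sum]
        exact Finset.sum_congr rfl fun n _ => by ring


/-- Let `M = ℂ^{d×d}` with delta-form `δ(x) = d·tr(xσ)` and
`μ⁻¹(x) = σ x σ⁻¹`.  For `δ₀` positive invertible commuting with `σ`, the element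
`υ := δ(δ₀²) d⁻² σ⁻² δ₀⁻²` satisfies
`υ = ∑_{x ∈ B} x* δ₀² μ⁻¹(x) δ₀⁻²` for any orthonormal basis `B` of `M` with respect to
`⟨x,y⟩ = δ(y*x)`. -/
theorem stmt19 (d : ℕ) (hd : 0 < d)
    (σ : Matrix (Fin d) (Fin d) ℂ) (hσ : σ.PosDef)
    (htr : (σ⁻¹).trace = (d : ℂ))
    (δ₀ : Matrix (Fin d) (Fin d) ℂ) (hδ₀ : δ₀.PosDef)
    (hδ₀σ : δ₀ * σ = σ * δ₀)
    -- an orthonormal basis of M for ⟨x,y⟩ = d·tr(y*xσ)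
    {ι : Type*} [Fintype ι] [DecidableEq ι] (b : ι → Matrix (Fin d) (Fin d) ℂ)
    (honb : ∀ i j, (d : ℂ) * ((star (b j)) * (b i) * σ).trace = if i = j then 1 else 0)
    (hspan : Submodule.span ℂ (Set.range b) = ⊤) :
    (((d : ℂ) * ((δ₀ * δ₀) * σ).trace) * ((d : ℂ) ^ 2)⁻¹) •
        (σ⁻¹ * σ⁻¹ * (δ₀⁻¹ * δ₀⁻¹))
      = ∑ i, (star (b i)) * (δ₀ * δ₀) * (σ * (b i) * σ⁻¹) * (δ₀⁻¹ * δ₀⁻¹) := by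
  have hd' : (d:ℂ) ≠ 0 := Nat.cast_ne_zero.mpr hd.ne'
  have hinv : σ⁻¹ * σ = 1 := Matrix.nonsing_inv_mul σ hσ.det_pos.ne'.isUnit
  have h := key3 d hd' σ hinv b honb hspan (δ₀ * δ₀ * σ)
  have hterm : ∀ i, star (b i) * (δ₀ * δ₀) * (σ * b i * σ⁻¹) * (δ₀⁻¹ * δ₀⁻¹)
      = (star (b i) * (δ₀ * δ₀ * σ) * b i) * (σ⁻¹ * (δ₀⁻¹ * δ₀⁻¹)) := by
    intro i
    simp only [Matrix.mul_assoc]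
  rw [Finset.sum_congr rfl fun i _ => hterm i, ← Finset.sum_mul, h, Matrix.smul_mul,
    show ((d:ℂ) * ((δ₀*δ₀)*σ).trace) * ((d:ℂ)^2)⁻¹ = (d:ℂ)⁻¹ * (δ₀*δ₀*σ).trace by
      field_simp,
    Matrix.mul_assoc σ⁻¹ σ⁻¹ (δ₀⁻¹ * δ₀⁻¹)]
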